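/- I_N is a coherent set of indifferent gambles: 0 ∈ I_N; no gamble f with f ≥ 0 and f ≠ 0 belongs to I_N, and no gamble f with f ≤ 0 and f ≠ 0 belongs to I_N; I_N is closed under multiplication by arbitrary real scalars; and I_N is closed under addition. -/
import Mathlib


namespace ExchPaper

/-- The lift of a permutation `σ` of `{1,…,N}` to gambles on `X^N`: `(σ^t f)(x) = f(σx)`. -/
def lift {X : Type*} (N : ℕ) (σ : Equiv.Perm (Fin N)) (f : (Fin N → X) → ℝ) :
    (Fin N → X) → ℝ :=
  fun x => f (fun k => x (σ k))

/-- `I_N`: the linear span of `{f − σ^t f : f ∈ L(X^N), σ a permutation of {1,…,N}}`. -/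
def IN (X : Type*) (N : ℕ) : Submodule ℝ ((Fin N → X) → ℝ) :=
  Submodule.span ℝ
    {g | ∃ (f : (Fin N → X) → ℝ) (σ : Equiv.Perm (Fin N)), g = f - lift N σ f}

/-- The total-sum linear functional. -/
def totalSum (X : Type*) [Fintype X] (N : ℕ) : ((Fin N → X) → ℝ) →ₗ[ℝ] ℝ where
  toFun g := ∑ x : Fin N → X, g x
  map_add' g h := by simp [Finset.sum_add_distrib]
  map_smul' a g := by simp [Finset.mul_sum]

lemma sum_eq_zero_of_mem_IN {X : Type*} [Fintype X] {N : ℕ} {g : (Fin N → X) → ℝ}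
    (hg : g ∈ IN X N) : ∑ x : Fin N → X, g x = 0 := by
  have : IN X N ≤ LinearMap.ker (totalSum X N) := by
    rw [IN, Submodule.span_le]
    rintro g ⟨f, σ, rfl⟩
    simp only [SetLike.mem_coe, LinearMap.mem_ker, totalSum, LinearMap.coe_mk, AddHom.coe_mk]
    have : ∑ x : Fin N → X, lift N σ f x = ∑ x : Fin N → X, f x := by
      refine Fintype.sum_equiv ((Equiv.piCongrLeft' (fun _ => X) σ.symm)) _ _ ?_
      intro x
      simp [lift, Equiv.piCongrLeft']
    simp [Pi.sub_apply, Finset.sum_sub_distrib, this]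
  exact this hg

theorem statement_4 (X : Type*) [Fintype X] [Nonempty X] (N : ℕ) (hN : 0 < N) :
    (0 : (Fin N → X) → ℝ) ∈ IN X N ∧
    (∀ f : (Fin N → X) → ℝ, (∀ x, 0 ≤ f x) → f ≠ 0 → f ∉ IN X N) ∧
    (∀ f : (Fin N → X) → ℝ, (∀ x, f x ≤ 0) → f ≠ 0 → f ∉ IN X N) ∧
    (∀ f ∈ IN X N, ∀ a : ℝ, a • f ∈ IN X N) ∧
    (∀ f ∈ IN X N, ∀ g ∈ IN X N, f + g ∈ IN X N) := by
  refine ⟨(IN X N).zero_mem, ?_, ?_, fun f hf a => (IN X N).smul_mem a hf,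
    fun f hf g hg => (IN X N).add_mem hf hg⟩
  · intro f hpos hne hmem
    apply hne
    have hsum := sum_eq_zero_of_mem_IN hmem
    funext x
    have := (Finset.sum_eq_zero_iff_of_nonneg (fun x _ => hpos x)).mp hsum x (Finset.mem_univ x)
    exact this
  · intro f hneg hne hmem
    apply hne
    have hsum := sum_eq_zero_of_mem_IN (Submodule.neg_mem _ hmem)
    simp only [Pi.neg_apply] at hsum
    funext x
    have := (Finset.sum_eq_zero_iff_of_nonneg (fun x _ => neg_nonneg.mpr (hneg x))).mp hsum x
      (Finset.mem_univ x)
    simpa using this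

end ExchPaper
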